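/- Let C_1, ..., C_N, C_test be exchangeable real-valued random variables. Let C_(1) ≤ ... ≤ C_N denote the order statistics of C_1,...,C_N, and let k satisfy k ≥ ⌈(N+1)(1-α)⌉ for some α ∈ (0,1). Then Pr(C_test > C_(k)) ≤ α. -/
import Mathlib


open MeasureTheory

/-- The `i`-th order statistic (0-based) of a finite tuple of reals. -/
noncomputable def orderStat {n : ℕ} (f : Fin n → ℝ) (i : Fin n) : ℝ :=
  f (Tuple.sort f i)

open Finset
open scoped ENNReal

lemma card_filter_perm {ι : Type*} [Fintype ι] [DecidableEq ι] (σ : Equiv.Perm ι)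
    (p : ι → Prop) [DecidablePred p] :
    (univ.filter fun i => p (σ i)).card = (univ.filter p).card := by
  apply Finset.card_bij (fun i _ => σ i) <;> simp
  intro b hb; exact ⟨σ.symm b, by simpa using hb⟩


lemma card_val_lt {N m : ℕ} (hm : m ≤ N) :
    (univ.filter fun i : Fin N => i.val < m).card = m := by
  rw [← Finset.card_range m]
  apply Finset.card_bij' (fun i _ => i.val) (fun a ha => ⟨a, lt_of_lt_of_le (mem_range.mp ha) hm⟩)
  case hj =>
    intro a ha
    simp only [mem_filter, mem_univ, true_and, Fin.val_mk, card_range]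
    exact mem_range.mp ha
  all_goals intro a ha; simp_all


lemma rank_bound {n k : ℕ} (hk : k ≤ n) (v : Fin n → ℝ) :
    (univ.filter fun j => k ≤ (univ.filter fun i => v i < v j).card).card ≤ n - k := by
  classical
  set σ := Tuple.sort v with hσ
  have hmono : Monotone (v ∘ σ) := Tuple.monotone_sort v
  have hR : ∀ i : Fin n, (univ.filter fun i' => v i' < v (σ i)).card ≤ i.val := by
    intro i
    rw [← card_filter_perm σ (fun i' => v i' < v (σ i))]
    calc (univ.filter fun i' => v (σ i') < v (σ i)).card
        ≤ (univ.filter fun i' : Fin n => i' < i).card := by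
          apply Finset.card_le_card
          intro j hj
          simp only [mem_filter, mem_univ, true_and] at hj ⊢
          by_contra h
          exact absurd (hmono (not_lt.mp h)) (not_le.mpr hj)
      _ = i.val := by
          have : (univ.filter fun i' : Fin n => i' < i) = Finset.Iio i := by
            ext; simp
          simp [this]
  have hT : k ≤ (univ.filter fun j => ¬ k ≤ (univ.filter fun i => v i < v j).card).card := by
    have : ∀ a ∈ (univ : Finset (Fin k)), σ (Fin.castLE hk a) ∈
        (univ.filter fun j => ¬ k ≤ (univ.filter fun i => v i < v j).card) := by
      intro a _
      simp only [mem_filter, mem_univ, true_and, not_le]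
      exact lt_of_le_of_lt (hR (Fin.castLE hk a)) a.isLt
    have hinj : ∀ a ∈ (univ : Finset (Fin k)), ∀ b ∈ (univ : Finset (Fin k)),
        σ (Fin.castLE hk a) = σ (Fin.castLE hk b) → a = b := by
      intro a _ b _ h
      have := σ.injective h
      exact Fin.castLE_injective hk this
    simpa using Finset.card_le_card_of_injOn _ this hinj
  have := Finset.card_filter_add_card_filter_not
    (s := (univ : Finset (Fin n)))
    (p := fun j => k ≤ (univ.filter fun i => v i < v j).card)
  simp only [Finset.card_univ, Fintype.card_fin] at this
  omega

lemma orderStat_lt_iff {N k : ℕ} (hk1 : 1 ≤ k) (hkN : k ≤ N) (f : Fin N → ℝ) (t : ℝ) :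
    orderStat f ⟨k - 1, by omega⟩ < t ↔ k ≤ (univ.filter fun i => f i < t).card := by
  classical
  set σ := Tuple.sort f with hσ
  have hmono : Monotone (f ∘ σ) := Tuple.monotone_sort f
  have hcard : (univ.filter fun i => f i < t).card
      = (univ.filter fun i => f (σ i) < t).card :=
    (card_filter_perm σ (fun i => f i < t)).symm
  rw [hcard]
  constructor
  · intro h
    calc k = (univ.filter fun i : Fin N => i.val < k).card := (card_val_lt hkN).symm
      _ ≤ (univ.filter fun i => f (σ i) < t).card := by
          apply Finset.card_le_card
          intro j hj
          simp only [mem_filter, mem_univ, true_and] at hj ⊢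
          have hle : j ≤ (⟨k - 1, by omega⟩ : Fin N) :=
            Fin.le_def.mpr (show j.val ≤ k - 1 by omega)
          exact lt_of_le_of_lt (hmono hle) h
  · intro h
    by_contra hlt
    push_neg at hlt
    have hsub : (univ.filter fun i => f (σ i) < t) ⊆
        (univ.filter fun i : Fin N => i.val < k - 1) := by
      intro j hj
      simp only [mem_filter, mem_univ, true_and] at hj ⊢
      by_contra hge
      have hle : (⟨k - 1, by omega⟩ : Fin N) ≤ j :=
        Fin.le_def.mpr (show k - 1 ≤ j.val by omega)
      exact absurd (lt_of_le_of_lt (le_trans hlt (hmono hle)) hj) (lt_irrefl _)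
    have := Finset.card_le_card hsub
    rw [card_val_lt (by omega)] at this
    omega

lemma card_meas {m : ℕ} (j : Fin m) :
    Measurable fun v : Fin m → ℝ => (univ.filter fun i => v i < v j).card := by
  simp_rw [Finset.card_filter]
  apply Finset.measurable_sum
  intro i _
  exact Measurable.ite (measurableSet_lt (measurable_pi_apply i) (measurable_pi_apply j))
    measurable_const measurable_const

lemma B_meas {m k : ℕ} (j : Fin m) :
    MeasurableSet {v : Fin m → ℝ | k ≤ (univ.filter fun i => v i < v j).card} :=
  card_meas j (measurableSet_Ici (a := k))


/-- Conformal quantile lemma: for exchangeable `C_1, …, C_N, C_test`, if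
`k ≥ ⌈(N+1)(1-α)⌉` then `Pr(C_test > C_(k)) ≤ α`. -/
theorem stmt0 {Ω : Type*} [MeasurableSpace Ω] (μ : Measure Ω) [IsProbabilityMeasure μ]
    (N : ℕ) (hN : 1 ≤ N) (C : Fin (N + 1) → Ω → ℝ)
    (hmeas : ∀ i, Measurable (C i))
    (hexch : ∀ σ : Equiv.Perm (Fin (N + 1)),
      Measure.map (fun ω i => C (σ i) ω) μ = Measure.map (fun ω i => C i ω) μ)
    (α : ℝ) (hα : α ∈ Set.Ioo (0 : ℝ) 1)
    (k : ℕ) (hk1 : 1 ≤ k) (hkN : k ≤ N)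
    (hk : ⌈((N : ℝ) + 1) * (1 - α)⌉ ≤ (k : ℤ)) :
    μ {ω | orderStat (fun i : Fin N => C i.castSucc ω) ⟨k - 1, by omega⟩
        < C (Fin.last N) ω} ≤ ENNReal.ofReal α := by
  classical
  obtain ⟨hα0, hα1⟩ := hα
  set F : Ω → (Fin (N + 1) → ℝ) := fun ω i => C i ω with hFdef
  have hF : Measurable F := measurable_pi_lambda _ hmeas
  set B : Fin (N + 1) → Set (Fin (N + 1) → ℝ) :=
    fun j => {v | k ≤ (univ.filter fun i => v i < v j).card} with hBdef
  have hBmeas : ∀ j, MeasurableSet (B j) := fun j => B_meas j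
  set A : Fin (N + 1) → Set Ω := fun j => F ⁻¹' B j with hAdef
  have hAmeas : ∀ j, MeasurableSet (A j) := fun j => hF (hBmeas j)
  have hAmem : ∀ j ω, ω ∈ A j ↔ k ≤ (univ.filter fun i => C i ω < C j ω).card := by
    intro j ω; rfl
  -- each A j has the same measure as A (last)
  have key : ∀ j, μ (A j) = (μ.map F) (B (Fin.last N)) := by
    intro j
    set σ := Equiv.swap j (Fin.last N) with hσdef
    have hG : Measurable (fun ω i => C (σ i) ω) := measurable_pi_lambda _ (fun i => hmeas _)
    have hmapG : (μ.map (fun ω i => C (σ i) ω)) (B (Fin.last N))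
        = μ ((fun ω i => C (σ i) ω) ⁻¹' B (Fin.last N)) :=
      Measure.map_apply hG (hBmeas _)
    have hpre : (fun ω i => C (σ i) ω) ⁻¹' B (Fin.last N) = A j := by
      ext ω
      rw [Set.mem_preimage, hAmem j ω]
      show k ≤ (univ.filter fun i => C (σ i) ω < C (σ (Fin.last N)) ω).card ↔ _
      have h1 : σ (Fin.last N) = j := Equiv.swap_apply_right _ _
      rw [h1, card_filter_perm σ (fun i => C i ω < C j ω)]
    rw [hexch σ, hpre] at hmapG
    exact hmapG.symm
  have hlastkey : (μ.map F) (B (Fin.last N)) = μ (A (Fin.last N)) :=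
    Measure.map_apply hF (hBmeas _)
  -- sum bound
  have hsum : ∑ j : Fin (N + 1), μ (A j) ≤ ((N + 1 - k : ℕ) : ℝ≥0∞) := by
    have h1 : ∀ j : Fin (N + 1), μ (A j) = ∫⁻ ω, (A j).indicator 1 ω ∂μ :=
      fun j => (lintegral_indicator_one (hAmeas j)).symm
    calc ∑ j : Fin (N + 1), μ (A j)
        = ∫⁻ ω, ∑ j : Fin (N + 1), (A j).indicator 1 ω ∂μ := by
          rw [lintegral_finset_sum]
          · exact Finset.sum_congr rfl fun j _ => h1 j
          · exact fun j _ => measurable_one.indicator (hAmeas j)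
      _ ≤ ∫⁻ _, ((N + 1 - k : ℕ) : ℝ≥0∞) ∂μ := by
          apply lintegral_mono
          intro ω
          have hcount : ∑ j : Fin (N + 1), (A j).indicator 1 ω
              = ((univ.filter fun j : Fin (N + 1) =>
                  k ≤ (univ.filter fun i => C i ω < C j ω).card).card : ℝ≥0∞) := by
            rw [Finset.card_filter]
            push_cast
            apply Finset.sum_congr rfl
            intro j _
            exact (Set.indicator_apply _ _ _).trans
              ((if_congr (hAmem j ω) rfl rfl).trans (by simp))
          show ∑ j : Fin (N + 1), (A j).indicator 1 ω ≤ _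
          rw [hcount]
          exact_mod_cast Nat.cast_le.mpr (rank_bound (by omega) (fun i => C i ω))
      _ = ((N + 1 - k : ℕ) : ℝ≥0∞) := by simp
  have hsum2 : ∑ j : Fin (N + 1), μ (A j) = ((N + 1 : ℕ) : ℝ≥0∞) * μ (A (Fin.last N)) := by
    have : ∀ j : Fin (N + 1), μ (A j) = μ (A (Fin.last N)) := fun j => (key j).trans hlastkey
    simp only [this, Finset.sum_const, Finset.card_univ, Fintype.card_fin, nsmul_eq_mul]
  rw [hsum2] at hsum
  -- arithmetic
  have hxk : ((N : ℝ) + 1) * (1 - α) ≤ (k : ℝ) := by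
    calc ((N : ℝ) + 1) * (1 - α) ≤ (⌈((N : ℝ) + 1) * (1 - α)⌉ : ℝ) := Int.le_ceil _
      _ ≤ (k : ℝ) := by exact_mod_cast hk
  have hreal : ((N + 1 - k : ℕ) : ℝ) ≤ ((N : ℝ) + 1) * α := by
    have : ((N + 1 - k : ℕ) : ℝ) = (N : ℝ) + 1 - k := by
      push_cast [Nat.cast_sub (by omega : k ≤ N + 1)]; ring
    rw [this]; nlinarith
  have hrhs : ((N + 1 - k : ℕ) : ℝ≥0∞) ≤ ((N + 1 : ℕ) : ℝ≥0∞) * ENNReal.ofReal α := by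
    rw [← ENNReal.ofReal_natCast (N + 1 - k), ← ENNReal.ofReal_natCast (N + 1),
      ← ENNReal.ofReal_mul (by positivity)]
    exact ENNReal.ofReal_le_ofReal (by push_cast; linarith [hreal])
  have hmul : ((N + 1 : ℕ) : ℝ≥0∞) * μ (A (Fin.last N))
      ≤ ((N + 1 : ℕ) : ℝ≥0∞) * ENNReal.ofReal α := le_trans hsum hrhs
  have hfin : μ (A (Fin.last N)) ≤ ENNReal.ofReal α := by
    rwa [ENNReal.mul_le_mul_iff_right (Nat.cast_ne_zero.mpr (by omega))
      (ENNReal.natCast_ne_top _)] at hmul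
  -- identify the event
  have hset : {ω | orderStat (fun i : Fin N => C i.castSucc ω) ⟨k - 1, by omega⟩
      < C (Fin.last N) ω} = A (Fin.last N) := by
    ext ω
    rw [Set.mem_setOf_eq, hAmem (Fin.last N) ω, orderStat_lt_iff hk1 hkN]
    have hc : (univ.filter fun i : Fin (N + 1) => C i ω < C (Fin.last N) ω).card
        = (univ.filter fun i : Fin N => C i.castSucc ω < C (Fin.last N) ω).card := by
      rw [Finset.card_filter, Finset.card_filter, Fin.sum_univ_castSucc]
      simp
    rw [hc]
  rw [hset]
  exact hfin
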